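/- Let 𝔡 be a finite-dimensional Lie algebra with invariant element β ∈ S²𝔡. In the Lie algebra 𝔡 ⋉ 𝔡*_β (with metric β̂), suppose E is a Lagrangian Lie subalgebra that is also a subgroupoid of the groupoid structure on 𝔡 ⋉ 𝔡*_β ⇉ 𝔡 (with source s(ξ,μ) = ξ, target t(ξ,μ) = ξ + β^♯(μ), multiplication (ξ₁,μ₁)∘(ξ₂,μ₂) = (ξ₂, μ₁+μ₂) when ξ₁ = ξ₂ + β^♯(μ₂)). Let 𝔤 = E ∩ (𝔡 ⊕ 0) be its set of units. Then E = 𝔤 ⋉ ann(𝔤), 𝔤 is a β-coisotropic Lie subalgebra of 𝔡; and conversely for every β-coisotropic Lie subalgebra 𝔤 ⊆ 𝔡, the subspace 𝔤 ⊕ ann(𝔤) is a Lagrangian Lie subalgebra of 𝔡 ⋉ 𝔡*_β which is a wide subgroupoid over 𝔤. -/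
import Mathlib


open Module LieAlgebra

/-- Classification of multiplicative Manin pairs over a point.  In
`𝔡̂ = 𝔡 ⋉ 𝔡*_β` (with metric `β̂` and bracket `Br`), carrying the groupoid
structure over `𝔡` with source `s(ξ,μ) = ξ`, target `t(ξ,μ) = ξ + β^♯(μ)` and
multiplication `(ξ₁,μ₁)∘(ξ₂,μ₂) = (ξ₂, μ₁+μ₂)` when `ξ₁ = ξ₂ + β^♯(μ₂)`:
if `E` is a Lagrangian Lie subalgebra which is also a subgroupoid, and
`𝔤 = E ∩ (𝔡 ⊕ 0)`, then `E = 𝔤 ⋉ ann(𝔤)` and `𝔤` is a β-coisotropic Lie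
subalgebra of `𝔡`.  Conversely, for any β-coisotropic Lie subalgebra
`𝔤' ⊆ 𝔡`, the subspace `𝔤' ⊕ ann(𝔤')` is a Lagrangian Lie subalgebra of
`𝔡 ⋉ 𝔡*_β` which is a wide subgroupoid over `𝔤'`. -/
theorem multiplicative_manin_pairs_over_point {K D : Type*} [Field K]
    [LieRing D] [LieAlgebra K D] [FiniteDimensional K D]
    (Bs : Module.Dual K D →ₗ[K] D)
    (hsymm : ∀ μ ν : Module.Dual K D, μ (Bs ν) = ν (Bs μ))
    (hinv : ∀ (ξ : D) (μ : Module.Dual K D),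
      Bs (μ ∘ₗ LieAlgebra.ad K D ξ) = -⁅ξ, Bs μ⁆)
    (br : Module.Dual K D → Module.Dual K D → Module.Dual K D)
    (hbr : ∀ (μ₁ μ₂ : Module.Dual K D) (ξ : D), br μ₁ μ₂ ξ = μ₂ ⁅ξ, Bs μ₁⁆)
    (Br : (D × Module.Dual K D) → (D × Module.Dual K D) → (D × Module.Dual K D))
    (hBr : ∀ x y : D × Module.Dual K D,
      Br x y = (⁅x.1, y.1⁆,
        -(y.2 ∘ₗ LieAlgebra.ad K D x.1) + (x.2 ∘ₗ LieAlgebra.ad K D y.1)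
          + br x.2 y.2))
    (hatβ : (D × Module.Dual K D) → (D × Module.Dual K D) → K)
    (hβ : ∀ x y : D × Module.Dual K D,
      hatβ x y = x.2 (Bs y.2) + x.2 y.1 + y.2 x.1)
    (E : Submodule K (D × Module.Dual K D))
    -- E is Lagrangian for β̂
    (hELag : ∀ x, x ∈ E ↔ ∀ y ∈ E, hatβ x y = 0)
    -- E is a Lie subalgebra
    (hEsub : ∀ x ∈ E, ∀ y ∈ E, Br x y ∈ E)
    -- E is a subgroupoid: it contains the units of its elements ...
    (hEunit : ∀ x ∈ E, (x.1, (0 : Module.Dual K D)) ∈ E ∧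
      (x.1 + Bs x.2, (0 : Module.Dual K D)) ∈ E)
    -- ... and is closed under the groupoid multiplication
    (hEmul : ∀ x ∈ E, ∀ y ∈ E, x.1 = y.1 + Bs y.2 →
      ((y.1, x.2 + y.2) : D × Module.Dual K D) ∈ E) :
    -- E = 𝔤 ⋉ ann(𝔤), where 𝔤 = {ξ | (ξ, 0) ∈ E} is the set of units of E
    (∀ x : D × Module.Dual K D, x ∈ E ↔
      ((x.1, (0 : Module.Dual K D)) ∈ E ∧
        ∀ ξ : D, (ξ, (0 : Module.Dual K D)) ∈ E → x.2 ξ = 0)) ∧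
    -- 𝔤 is a Lie subalgebra of 𝔡
    (∀ ξ η : D, (ξ, (0 : Module.Dual K D)) ∈ E →
      (η, (0 : Module.Dual K D)) ∈ E → (⁅ξ, η⁆, (0 : Module.Dual K D)) ∈ E) ∧
    -- 𝔤 is β-coisotropic
    (∀ μ ν : Module.Dual K D,
      (∀ ξ : D, (ξ, (0 : Module.Dual K D)) ∈ E → μ ξ = 0) →
      (∀ ξ : D, (ξ, (0 : Module.Dual K D)) ∈ E → ν ξ = 0) →
      μ (Bs ν) = 0) ∧
    -- converse: every β-coisotropic Lie subalgebra 𝔤' gives a Lagrangian Lie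
    -- subalgebra E' = 𝔤' ⊕ ann(𝔤') which is a wide subgroupoid over 𝔤'
    (∀ G' : Submodule K D,
      (∀ ξ ∈ G', ∀ η ∈ G', ⁅ξ, η⁆ ∈ G') →
      (∀ μ ν : Module.Dual K D, μ ∈ G'.dualAnnihilator →
        ν ∈ G'.dualAnnihilator → μ (Bs ν) = 0) →
      -- E' is Lagrangian
      ((∀ x : D × Module.Dual K D,
        (x.1 ∈ G' ∧ x.2 ∈ G'.dualAnnihilator) ↔
          (∀ y : D × Module.Dual K D,
            y.1 ∈ G' → y.2 ∈ G'.dualAnnihilator → hatβ x y = 0)) ∧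
      -- E' is a Lie subalgebra
      (∀ x y : D × Module.Dual K D, x.1 ∈ G' → x.2 ∈ G'.dualAnnihilator →
        y.1 ∈ G' → y.2 ∈ G'.dualAnnihilator →
        (Br x y).1 ∈ G' ∧ (Br x y).2 ∈ G'.dualAnnihilator) ∧
      -- E' is a wide subgroupoid: it contains all units over 𝔤', source and
      -- target of its elements lie in 𝔤', and it is closed under multiplication
      (∀ ξ ∈ G', (0 : Module.Dual K D) ∈ G'.dualAnnihilator) ∧
      (∀ x : D × Module.Dual K D, x.1 ∈ G' → x.2 ∈ G'.dualAnnihilator →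
        x.1 + Bs x.2 ∈ G') ∧
      (∀ x y : D × Module.Dual K D, x.1 ∈ G' → x.2 ∈ G'.dualAnnihilator →
        y.1 ∈ G' → y.2 ∈ G'.dualAnnihilator → x.1 = y.1 + Bs y.2 →
        (y.1 ∈ G' ∧ x.2 + y.2 ∈ G'.dualAnnihilator)))) := by
  -- forward: second component of elements of E annihilates the units
  have key1 : ∀ x ∈ E, ∀ ξ : D, (ξ, (0 : Module.Dual K D)) ∈ E → x.2 ξ = 0 := by
    intro x hx ξ hξ
    have h := (hELag x).mp hx (ξ, 0) hξ
    rw [hβ] at h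
    simpa using h
  -- backward direction of the first claim
  have mem_back : ∀ x : D × Module.Dual K D,
      (x.1, (0 : Module.Dual K D)) ∈ E →
      (∀ ξ : D, (ξ, (0 : Module.Dual K D)) ∈ E → x.2 ξ = 0) → x ∈ E := by
    intro x h1 h2
    rw [hELag]
    intro y hy
    rw [hβ]
    obtain ⟨hu1, hu2⟩ := hEunit y hy
    have ha : x.2 (y.1 + Bs y.2) = 0 := h2 _ hu2
    have hb : x.2 y.1 = 0 := h2 _ hu1
    have hc : y.2 x.1 = 0 := key1 y hy x.1 h1
    have hd : x.2 (Bs y.2) = 0 := by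
      have h5 := map_add x.2 y.1 (Bs y.2)
      rw [ha, hb] at h5
      linear_combination -h5
    rw [hb, hc, hd]; ring
  have hbr0 : br 0 0 = 0 := by
    ext ζ
    rw [hbr]
    simp
  refine ⟨?_, ?_, ?_, ?_⟩
  · intro x
    constructor
    · intro hx
      exact ⟨(hEunit x hx).1, key1 x hx⟩
    · intro ⟨h1, h2⟩
      exact mem_back x h1 h2
  · intro ξ η hξ hη
    have h := hEsub (ξ, 0) hξ (η, 0) hη
    rw [hBr] at h
    simpa [hbr0] using h
  · intro μ ν hμ hν
    have h0 : ((0 : D), (0 : Module.Dual K D)) ∈ E := by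
      simpa [Prod.mk_zero_zero] using E.zero_mem
    have hμE : ((0 : D), μ) ∈ E := mem_back (0, μ) h0 hμ
    have hνE : ((0 : D), ν) ∈ E := mem_back (0, ν) h0 hν
    have h := (hELag ((0 : D), μ)).mp hμE _ hνE
    rw [hβ] at h
    simpa using h
  · intro G' hsub hcoiso
    -- β^♯ maps ann(G') into G'
    have hBsann : ∀ μ ∈ G'.dualAnnihilator, Bs μ ∈ G' := by
      intro μ hμ
      have h : Bs μ ∈ G'.dualAnnihilator.dualCoannihilator := by
        rw [Submodule.mem_dualCoannihilator]
        intro ν hν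
        exact hcoiso ν μ hν hμ
      rwa [Subspace.dualAnnihilator_dualCoannihilator_eq] at h
    refine ⟨?_, ?_, ?_, ?_, ?_⟩
    · intro x
      constructor
      · intro ⟨hx1, hx2⟩ y hy1 hy2
        rw [hβ]
        have ha : x.2 (Bs y.2) = 0 := hcoiso _ _ hx2 hy2
        have hb : x.2 y.1 = 0 := (Submodule.mem_dualAnnihilator _).mp hx2 _ hy1
        have hc : y.2 x.1 = 0 := (Submodule.mem_dualAnnihilator _).mp hy2 _ hx1
        rw [ha, hb, hc]; ring
      · intro h
        have hx2 : x.2 ∈ G'.dualAnnihilator := by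
          rw [Submodule.mem_dualAnnihilator]
          intro η hη
          have := h (η, 0) hη G'.dualAnnihilator.zero_mem
          rw [hβ] at this
          simpa using this
        have hBsx : Bs x.2 ∈ G' := hBsann _ hx2
        have hsum : x.1 + Bs x.2 ∈ G' := by
          have hmem : x.1 + Bs x.2 ∈ G'.dualAnnihilator.dualCoannihilator := by
            rw [Submodule.mem_dualCoannihilator]
            intro ν hν
            have := h (0, ν) G'.zero_mem hν
            rw [hβ] at this
            simp only [map_zero, map_add] at this ⊢
            have hs := hsymm x.2 ν
            rw [hs] at this
            linear_combination this
          rwa [Subspace.dualAnnihilator_dualCoannihilator_eq] at hmem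
        have hx1 : x.1 ∈ G' := by
          have := G'.sub_mem hsum hBsx
          simpa using this
        exact ⟨hx1, hx2⟩
    · intro x y hx1 hx2 hy1 hy2
      rw [hBr]
      constructor
      · exact hsub _ hx1 _ hy1
      · rw [Submodule.mem_dualAnnihilator]
        intro η hη
        have h1 : y.2 ⁅x.1, η⁆ = 0 :=
          (Submodule.mem_dualAnnihilator _).mp hy2 _ (hsub _ hx1 _ hη)
        have h2 : x.2 ⁅y.1, η⁆ = 0 :=
          (Submodule.mem_dualAnnihilator _).mp hx2 _ (hsub _ hy1 _ hη)
        have h3 : y.2 ⁅η, Bs x.2⁆ = 0 :=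
          (Submodule.mem_dualAnnihilator _).mp hy2 _ (hsub _ hη _ (hBsann _ hx2))
        simp only [LinearMap.add_apply, LinearMap.neg_apply, LinearMap.comp_apply,
          LieAlgebra.ad_apply, hbr]
        rw [h1, h2, h3]; ring
    · intro ξ _
      exact G'.dualAnnihilator.zero_mem
    · intro x hx1 hx2
      exact G'.add_mem hx1 (hBsann _ hx2)
    · intro x y _ hx2 hy1 hy2 _
      exact ⟨hy1, G'.dualAnnihilator.add_mem hx2 hy2⟩
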